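/- Define F(n) = c + (r − d·exp(α(u − γn)))·n and assume d·e^(αu) > r (equivalently u > (1/α)·ln(r/d)). Then there exists a unique n̄ > 0 with F′(n̄) = 0; moreover n̄ < 2/(αγ), F is strictly decreasing on [0, n̄], strictly increasing on [n̄, ∞), and F(n) ≥ F(n̄) for all n ≥ 0. -/

import Mathlib

/-- The right-hand side of the deterministic limiting bond equation. -/
noncomputable def Fb (α γ u c r d : ℝ) : ℝ → ℝ :=
  fun n => c + (r - d * Real.exp (α * (u - γ * n))) * n

noncomputable def Gb (α γ u r d : ℝ) : ℝ → ℝ :=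
  fun n => r + d * (α * γ * n - 1) * Real.exp (α * (u - γ * n))

lemma hasDerivAt_Fb (α γ u c r d n : ℝ) :
    HasDerivAt (Fb α γ u c r d) (Gb α γ u r d n) n := by
  have hE : HasDerivAt (fun x : ℝ => α * (u - γ * x)) (α * -(γ * 1)) n :=
    (((hasDerivAt_id n).const_mul γ).const_sub u).const_mul α
  have hexp := hE.exp
  have h1 := ((hexp.const_mul d).const_sub r).mul (hasDerivAt_id n)
  have h2 := h1.const_add c
  refine h2.congr_deriv ?_
  simp only [Gb, id_eq]
  ring

lemma hasDerivAt_Gb (α γ u r d n : ℝ) :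
    HasDerivAt (Gb α γ u r d)
      (d * α * γ * (2 - α * γ * n) * Real.exp (α * (u - γ * n))) n := by
  have hE : HasDerivAt (fun x : ℝ => α * (u - γ * x)) (α * -(γ * 1)) n :=
    (((hasDerivAt_id n).const_mul γ).const_sub u).const_mul α
  have hexp := hE.exp
  have hl : HasDerivAt (fun x : ℝ => d * (α * γ * x - 1)) (d * (α * γ * 1)) n := by
    exact (((hasDerivAt_id n).const_mul (α*γ)).sub_const 1).const_mul d
  have h1 := (hl.mul hexp).const_add r
  refine h1.congr_deriv ?_
  ring

/-- If `d·e^(αu) > r`, then `F` has a unique positive critical point `n̄`;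
moreover `n̄ < 2/(αγ)`, `F` is strictly decreasing on `[0,n̄]`, strictly
increasing on `[n̄,∞)`, and `F(n) ≥ F(n̄)` for all `n ≥ 0`. -/
theorem stmt_7 (α γ u c r d : ℝ) (hα : 0 < α) (hγ : 0 < γ) (hu : 0 < u)
    (hc : 0 < c) (hr : 0 < r) (hd : 0 < d)
    (h : r < d * Real.exp (α * u)) :
    ∃ nbar : ℝ, 0 < nbar ∧ deriv (Fb α γ u c r d) nbar = 0 ∧
      (∀ m : ℝ, 0 < m → deriv (Fb α γ u c r d) m = 0 → m = nbar) ∧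
      nbar < 2 / (α * γ) ∧
      StrictAntiOn (Fb α γ u c r d) (Set.Icc 0 nbar) ∧
      StrictMonoOn (Fb α γ u c r d) (Set.Ici nbar) ∧
      ∀ n : ℝ, 0 ≤ n → Fb α γ u c r d nbar ≤ Fb α γ u c r d n := by
  have hαγ : 0 < α * γ := mul_pos hα hγ
  set G := Gb α γ u r d with hG
  have hderiv : ∀ x : ℝ, deriv (Fb α γ u c r d) x = G x :=
    fun x => (hasDerivAt_Fb α γ u c r d x).deriv
  have hGcont : Continuous G := by
    have : ∀ x : ℝ, HasDerivAt G _ x := fun x => hasDerivAt_Gb α γ u r d x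
    exact continuous_iff_continuousAt.mpr fun x => (hasDerivAt_Gb α γ u r d x).continuousAt
  -- G at key points
  have hG0 : G 0 < 0 := by
    simp only [hG, Gb, mul_zero, zero_sub, mul_zero, sub_zero]
    nlinarith [Real.exp_pos (α * u)]
  have hGinv : G (1 / (α * γ)) = r := by
    simp only [hG, Gb]
    rw [mul_one_div_cancel (ne_of_gt hαγ)]
    ring
  have hGge : ∀ x : ℝ, 1 / (α * γ) ≤ x → r ≤ G x := by
    intro x hx
    have h1 : 1 ≤ α * γ * x := by
      rw [div_le_iff₀ hαγ] at hx; linarith [hx]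
    have he := Real.exp_pos (α * (u - γ * x))
    simp only [hG, Gb]
    have hnn : 0 ≤ d * (α * γ * x - 1) * Real.exp (α * (u - γ * x)) :=
      mul_nonneg (mul_nonneg hd.le (by linarith)) he.le
    linarith
  -- G strictly monotone on [0, 1/(αγ)]
  have hGmono : StrictMonoOn G (Set.Icc 0 (1 / (α * γ))) := by
    apply strictMonoOn_of_deriv_pos (convex_Icc _ _) hGcont.continuousOn
    intro x hx
    rw [interior_Icc] at hx
    rw [(hasDerivAt_Gb α γ u r d x).deriv]
    have hx2 : α * γ * x < 1 := by
      have := hx.2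
      rw [lt_div_iff₀ hαγ] at this; linarith
    have he := Real.exp_pos (α * (u - γ * x))
    have : 0 < d * α * γ * (2 - α * γ * x) := by
      apply mul_pos (by positivity) (by linarith)
    exact mul_pos this he
  -- existence of nbar by IVT
  have hle : (0:ℝ) ≤ 1 / (α * γ) := le_of_lt (by positivity)
  have hivt := intermediate_value_Icc hle hGcont.continuousOn
  have h0mem : (0:ℝ) ∈ Set.Icc (G 0) (G (1 / (α * γ))) := by
    constructor
    · exact le_of_lt hG0
    · rw [hGinv]; exact le_of_lt hr
  obtain ⟨nbar, hnmem, hGn⟩ := hivt h0mem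
  have hnpos : 0 < nbar := by
    rcases lt_or_eq_of_le hnmem.1 with h' | h'
    · exact h'
    · exact absurd hGn (by rw [← h']; exact ne_of_lt hG0)
  have hnlt : nbar < 1 / (α * γ) := by
    rcases lt_or_eq_of_le hnmem.2 with h' | h'
    · exact h'
    · exfalso; rw [h', hGinv] at hGn; exact (ne_of_gt hr) hGn
  -- G positive to the right of nbar
  have hGpos : ∀ x : ℝ, nbar < x → 0 < G x := by
    intro x hx
    rcases le_or_gt x (1 / (α * γ)) with h' | h'
    · have := hGmono ⟨hnmem.1, hnmem.2⟩ ⟨le_of_lt (lt_of_le_of_lt hnmem.1 hx), h'⟩ hx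
      rw [hGn] at this; exact this
    · exact lt_of_lt_of_le hr (hGge x (le_of_lt h'))
  have hGneg : ∀ x : ℝ, 0 ≤ x → x < nbar → G x < 0 := by
    intro x hx0 hx
    have := hGmono ⟨hx0, le_of_lt (lt_trans hx hnlt)⟩ ⟨hnmem.1, hnmem.2⟩ hx
    rw [hGn] at this; exact this
  have hFcont : Continuous (Fb α γ u c r d) :=
    continuous_iff_continuousAt.mpr fun x => (hasDerivAt_Fb α γ u c r d x).continuousAt
  have hAnti : StrictAntiOn (Fb α γ u c r d) (Set.Icc 0 nbar) := by
    apply strictAntiOn_of_deriv_neg (convex_Icc _ _) hFcont.continuousOn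
    intro x hx
    rw [interior_Icc] at hx
    rw [hderiv x]
    exact hGneg x (le_of_lt hx.1) hx.2
  have hMono : StrictMonoOn (Fb α γ u c r d) (Set.Ici nbar) := by
    apply strictMonoOn_of_deriv_pos (convex_Ici _) hFcont.continuousOn
    intro x hx
    rw [interior_Ici] at hx
    rw [hderiv x]
    exact hGpos x hx
  refine ⟨nbar, hnpos, by rw [hderiv]; exact hGn, ?_, ?_, hAnti, hMono, ?_⟩
  · -- uniqueness
    intro m hm hdm
    rw [hderiv m] at hdm
    have hmlt : m < 1 / (α * γ) := by
      by_contra h'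
      push_neg at h'
      have := hGge m h'
      rw [hdm] at this
      linarith
    exact hGmono.injOn ⟨le_of_lt hm, le_of_lt hmlt⟩ ⟨hnmem.1, hnmem.2⟩ (hdm.trans hGn.symm)
  · -- nbar < 2/(αγ)
    have hpos : 0 < 1 / (α * γ) := by positivity
    have h2 : 2 / (α * γ) = 1 / (α * γ) + 1 / (α * γ) := by ring
    linarith
  · -- minimum
    intro n hn
    rcases lt_trichotomy n nbar with h' | h' | h'
    · exact le_of_lt (hAnti ⟨hn, le_of_lt h'⟩ ⟨le_of_lt hnpos, le_refl _⟩ h')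
    · rw [h']
    · exact le_of_lt (hMono (le_refl nbar) (le_of_lt h') h')
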